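/- Let Σ be a p×p real symmetric positive definite matrix, let {u_i}_{i=1}^p be an orthonormal basis of ℝ^p, set φ_i = u_iᵀ Σ u_i and Σ̃ = Σ_{i=1}^p φ_i u_i u_iᵀ. Then tr[(Σ̃⁻¹ − Σ⁻¹)² Σ] = tr(Σ⁻¹) − Σ_{i=1}^p φ_i⁻¹. -/

import Mathlib

open Matrix

private lemma vmv_mul_vmv {p : ℕ} (a b c d : Fin p → ℝ) :
    vecMulVec a b * vecMulVec c d = (b ⬝ᵥ c) • vecMulVec a d := by
  ext k l
  simp only [mul_apply, vecMulVec_apply, Matrix.smul_apply, smul_eq_mul, dotProduct,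
    Finset.sum_mul]
  exact Finset.sum_congr rfl fun j _ => by ring

private lemma trace_vmv_mul {p : ℕ} (a b : Fin p → ℝ) (A : Matrix (Fin p) (Fin p) ℝ) :
    Matrix.trace (vecMulVec a b * A) = b ⬝ᵥ A *ᵥ a := by
  simp only [Matrix.trace, Matrix.diag, mul_apply, vecMulVec_apply, dotProduct,
    mulVec, Finset.mul_sum]
  rw [Finset.sum_comm]
  exact Finset.sum_congr rfl fun j _ => Finset.sum_congr rfl fun k _ => by ring

/-- Disutility-loss decomposition for the invariant estimator with shrinkers
`φᵢ = uᵢᵀ Σ uᵢ`:  `tr[(Σ̃⁻¹ - Σ⁻¹)² Σ] = tr Σ⁻¹ - ∑ φᵢ⁻¹`. -/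
theorem statement4 (p : ℕ) (S : Matrix (Fin p) (Fin p) ℝ) (hS : S.PosDef)
    (u : Fin p → Fin p → ℝ)
    (hu : ∀ i j, u i ⬝ᵥ u j = if i = j then (1 : ℝ) else 0)
    (φ : Fin p → ℝ) (hφ : ∀ i, φ i = u i ⬝ᵥ S *ᵥ u i)
    (T : Matrix (Fin p) (Fin p) ℝ) (hT : T = ∑ i, φ i • vecMulVec (u i) (u i)) :
    Matrix.trace ((T⁻¹ - S⁻¹) * (T⁻¹ - S⁻¹) * S)
      = Matrix.trace S⁻¹ - ∑ i, (φ i)⁻¹ := by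
  -- positivity of the shrinkers
  have hφpos : ∀ i, 0 < φ i := by
    intro i
    have hne : u i ≠ 0 := by
      intro h
      have h1 := hu i i
      simp [h] at h1
    have h2 := hS.dotProduct_mulVec_pos hne
    rw [hφ]
    simpa using h2
  have hφne : ∀ i, φ i ≠ 0 := fun i => (hφpos i).ne'
  -- completeness: ∑ uᵢuᵢᵀ = 1
  have hUU : (Matrix.of u)ᵀ * (Matrix.of u) = 1 := by
    rw [_root_.mul_eq_one_comm]
    ext i j
    simpa [mul_apply, dotProduct, one_apply] using hu i j
  have hsum1 : ∑ i, vecMulVec (u i) (u i) = (1 : Matrix (Fin p) (Fin p) ℝ) := by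
    rw [← hUU]
    ext k l
    simp [Matrix.sum_apply, vecMulVec_apply, mul_apply]
  -- product collapse
  have hcollapse : ∀ (c d : Fin p → ℝ),
      (∑ i, c i • vecMulVec (u i) (u i)) * (∑ j, d j • vecMulVec (u j) (u j))
        = ∑ i, (c i * d i) • vecMulVec (u i) (u i) := by
    intro c d
    rw [Finset.sum_mul_sum]
    have hterm : ∀ i j, (c i • vecMulVec (u i) (u i)) * (d j • vecMulVec (u j) (u j))
        = if i = j then (c i * d i) • vecMulVec (u i) (u i) else 0 := by
      intro i j
      rw [smul_mul_assoc, mul_smul_comm, vmv_mul_vmv, hu i j]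
      split_ifs with h
      · subst h; rw [one_smul, smul_smul]
      · simp
    simp_rw [hterm]
    simp [Finset.sum_ite_eq]
  set M : Matrix (Fin p) (Fin p) ℝ := ∑ i, (φ i)⁻¹ • vecMulVec (u i) (u i) with hM
  -- T⁻¹ = M
  have hTM : T * M = 1 := by
    rw [hT, hM, hcollapse]
    have : ∀ i, (φ i * (φ i)⁻¹) • vecMulVec (u i) (u i) = vecMulVec (u i) (u i) := by
      intro i; rw [mul_inv_cancel₀ (hφne i), one_smul]
    simp_rw [this]
    exact hsum1
  have hTinv : T⁻¹ = M := Matrix.inv_eq_right_inv hTM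
  -- invertibility of S
  have hSdet : IsUnit S.det := isUnit_iff_ne_zero.mpr hS.det_pos.ne'
  have hSinv : S⁻¹ * S = 1 := Matrix.nonsing_inv_mul S hSdet
  have hSinv' : S * S⁻¹ = 1 := Matrix.mul_nonsing_inv S hSdet
  -- trace of M
  have htrM : Matrix.trace M = ∑ i, (φ i)⁻¹ := by
    rw [hM, Matrix.trace_sum]
    refine Finset.sum_congr rfl fun i _ => ?_
    have : Matrix.trace (vecMulVec (u i) (u i)) = (1 : ℝ) := by
      have := hu i i
      simp only [if_pos rfl] at this
      simpa [Matrix.trace, Matrix.diag, vecMulVec_apply, dotProduct] using this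
    rw [Matrix.trace_smul, this, smul_eq_mul, mul_one]
  -- trace of M*M*S
  have htrMMS : Matrix.trace (M * M * S) = ∑ i, (φ i)⁻¹ := by
    rw [hM, hcollapse, Finset.sum_mul, Matrix.trace_sum]
    refine Finset.sum_congr rfl fun i _ => ?_
    rw [smul_mul_assoc, Matrix.trace_smul, trace_vmv_mul, ← hφ, smul_eq_mul]
    field_simp
  -- expand
  have htrSMS : Matrix.trace (S⁻¹ * M * S) = Matrix.trace M := by
    rw [Matrix.trace_mul_cycle, hSinv', one_mul]
  rw [hTinv]
  have hexp : (M - S⁻¹) * (M - S⁻¹) * S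
      = M * M * S - M * (S⁻¹ * S) - S⁻¹ * M * S + S⁻¹ * (S⁻¹ * S) := by
    noncomm_ring
  rw [hexp, hSinv, mul_one, Matrix.trace_add, Matrix.trace_sub, Matrix.trace_sub,
    htrMMS, htrM, htrSMS, htrM]
  ring
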